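/- Let (T,π,φ) be a tree with a reference point, (Y,ρ) a metric space without isolated points, and K : T → C(Y,ρ) a partition of Y parametrized by (T,π,φ). Then for every w ∈ T, the compact set K_w has no isolated points. -/
import Mathlib


open Metric Set

/-- `(T, f, φ)` is a *tree with a reference point*:
(H1) the set `F_f = {w : f^[n] w = w for some n ≥ 1}` has at most one element,
(H2) any two points have a common iterated image,
and `φ ∈ F_f` whenever `F_f ≠ ∅`. -/
def IsTreeRP {T : Type*} (f : T → T) (φ : T) : Prop :=
  {w : T | ∃ n : ℕ, 1 ≤ n ∧ f^[n] w = w}.Subsingleton ∧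
  (∀ w v : T, ∃ n m : ℕ, f^[n] w = f^[m] v) ∧
  ((∃ w : T, ∃ n : ℕ, 1 ≤ n ∧ f^[n] w = w) → ∃ n : ℕ, 1 ≤ n ∧ f^[n] φ = φ)

/-- `b w v = min {n ≥ 0 : f^[n] w = f^[m] v for some m ≥ 0}`. -/
def IsTreeB {T : Type*} (f : T → T) (b : T → T → ℕ) : Prop :=
  ∀ w v : T, IsLeast {n : ℕ | ∃ m : ℕ, f^[n] w = f^[m] v} (b w v)

/-- The level `[w] = b(w,φ) - b(φ,w)` of a vertex. -/
def treeLevel {T : Type*} (b : T → T → ℕ) (φ : T) (w : T) : ℤ :=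
  (b w φ : ℤ) - (b φ w : ℤ)

/-- `K : T → Set Y` is a *partition* of `Y` parametrized by the tree `(T, f, φ)`:
each `K w` is a nonempty compact set which is not a single point,
(P1) the level-0 sets cover `Y` and `K w = ⋃_{v ∈ f⁻¹(w)} K v`, and
(P2) the intersection along any descending chain is a single point. -/
def IsPartition {T : Type*} {Y : Type*} [MetricSpace Y]
    (f : T → T) (φ : T) (b : T → T → ℕ) (K : T → Set Y) : Prop :=
  (∀ w : T, IsCompact (K w)) ∧
  (∀ w : T, (K w).Nontrivial) ∧
  ((⋃ w ∈ {w : T | treeLevel b φ w = 0}, K w) = univ) ∧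
  (∀ w : T, (⋃ v ∈ {v : T | f v = w}, K v) = K w) ∧
  (∀ ws : ℤ → T, (∀ k : ℤ, f (ws (k + 1)) = ws k) →
    ∃ y : Y, (⋂ k : ℤ, K (ws k)) = {y})

/-- If `Y` has no isolated points and `K` is a partition of `Y` parametrized by a tree
with a reference point, then every `K_w` has no isolated points. -/
theorem partition_no_isolated_points {T : Type*} {Y : Type*} [MetricSpace Y]
    [Countable T] (f : T → T) (φ : T) (b : T → T → ℕ) (K : T → Set Y)
    (htree : IsTreeRP f φ) (hb : IsTreeB f b)
    (hY : ∀ y : Y, y ∈ closure ({y}ᶜ : Set Y))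
    (hK : IsPartition f φ b K) :
    ∀ w : T, ∀ y ∈ K w, y ∈ closure (K w \ {y}) := by

  obtain ⟨hcomp, hnont, _, hcover, hchain⟩ := hK
  intro w y hy
  rw [Metric.mem_closure_iff]
  intro ε hε
  have step : ∀ u : T, y ∈ K u → ∃ v, f v = u ∧ y ∈ K v := by
    intro u hu
    rw [← hcover u] at hu
    simpa using hu
  let g : ℕ → {u : T // y ∈ K u} := fun n => Nat.rec ⟨w, hy⟩
    (fun _ p => ⟨(step p.1 p.2).choose, (step p.1 p.2).choose_spec.2⟩) n
  have hg0 : (g 0).1 = w := rfl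
  have hgf : ∀ n, f (g (n + 1)).1 = (g n).1 := fun n => (step (g n).1 (g n).2).choose_spec.1
  have Ksub : ∀ v, K v ⊆ K (f v) := by
    intro v
    conv_rhs => rw [← hcover (f v)]
    exact subset_iUnion₂ (s := fun u (_ : f u = f v) => K u) v rfl
  have KsubIter : ∀ n, K w ⊆ K (f^[n] w) := by
    intro n
    induction n with
    | zero => exact subset_rfl
    | succ n ih =>
      rw [Function.iterate_succ_apply']
      exact ih.trans (Ksub _)
  let ws : ℤ → T := fun k => if h : 0 ≤ k then (g k.toNat).1 else f^[(-k).toNat] w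
  have hws : ∀ k : ℤ, f (ws (k + 1)) = ws k := by
    intro k
    rcases le_or_gt 0 k with h | h
    · have h1 : 0 ≤ k + 1 := by omega
      simp only [ws, dif_pos h, dif_pos h1]
      have hk : (k + 1).toNat = k.toNat + 1 := by omega
      rw [hk]
      exact hgf _
    · by_cases h1 : 0 ≤ k + 1
      · have hk0 : k = -1 := by omega
        subst hk0
        simp only [ws]
        norm_num
        rw [hg0]
      · simp only [ws, dif_neg h1, dif_neg (by omega : ¬ 0 ≤ k)]
        have hk : (-k).toNat = (-(k + 1)).toNat + 1 := by omega
        rw [hk, Function.iterate_succ_apply']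
  obtain ⟨y0, hy0⟩ := hchain ws hws
  have hyin : ∀ k : ℤ, y ∈ K (ws k) := by
    intro k
    by_cases h : 0 ≤ k
    · simp only [ws, dif_pos h]; exact (g k.toNat).2
    · simp only [ws, dif_neg h]; exact KsubIter _ hy
  have hyeq : y0 = y := by
    have hmem : y ∈ ⋂ k : ℤ, K (ws k) := mem_iInter.2 hyin
    rw [hy0] at hmem
    exact hmem.symm
  have hInter : (⋂ n : ℕ, K ((g n).1)) ⊆ {y} := by
    intro z hz
    have hmem : z ∈ ⋂ k : ℤ, K (ws k) := by
      rw [mem_iInter]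
      intro k
      by_cases h : 0 ≤ k
      · simp only [ws, dif_pos h]; exact mem_iInter.1 hz k.toNat
      · simp only [ws, dif_neg h]
        exact KsubIter _ (by simpa [hg0] using mem_iInter.1 hz 0)
    rw [hy0, hyeq] at hmem
    exact hmem
  have hmono : ∀ n, K ((g (n + 1)).1) ⊆ K ((g n).1) := fun n => by
    rw [← hgf n]; exact Ksub _
  have key : ∃ n, K ((g n).1) ⊆ ball y ε := by
    by_contra hcon
    push_neg at hcon
    have hne : ∀ n, (K ((g n).1) ∩ (ball y ε)ᶜ).Nonempty := by
      intro n
      obtain ⟨z, hz1, hz2⟩ := not_subset.1 (hcon n)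
      exact ⟨z, hz1, hz2⟩
    have hcl : IsClosed ((ball y ε)ᶜ : Set Y) := isOpen_ball.isClosed_compl
    obtain ⟨z, hz⟩ := IsCompact.nonempty_iInter_of_sequence_nonempty_isCompact_isClosed
      (fun n => K ((g n).1) ∩ (ball y ε)ᶜ)
      (fun n => inter_subset_inter_left _ (hmono n)) hne
      ((hcomp _).inter_right hcl)
      (fun n => ((hcomp _).isClosed).inter hcl)
    have hzy : z = y := hInter (mem_iInter.2 fun n => (mem_iInter.1 hz n).1)
    exact (mem_iInter.1 hz 0).2 (hzy ▸ mem_ball_self hε)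
  obtain ⟨n, hn⟩ := key
  have hsubw : ∀ n, K ((g n).1) ⊆ K w := by
    intro n
    induction n with
    | zero => rw [hg0]
    | succ n ih => exact (hmono n).trans ih
  obtain ⟨z1, hz1, z2, hz2, hne'⟩ := hnont ((g n).1)
  have hz : ∃ z ∈ K ((g n).1), z ≠ y := by
    rcases eq_or_ne z1 y with h | h
    · exact ⟨z2, hz2, fun hz2y => hne' (by rw [h, hz2y])⟩
    · exact ⟨z1, hz1, h⟩
  obtain ⟨z, hzK, hzy⟩ := hz
  refine ⟨z, ⟨hsubw n hzK, hzy⟩, ?_⟩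
  have := hn hzK
  rw [mem_ball] at this
  rw [dist_comm]
  exact this
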